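/- Let ω(z) = z^{−(q+1)} + ρ/z + e(z) with e holomorphic near 0, and consider the curve Z(θ) = φ(r e^{iθ}) where φ is a primitive of ω along the circle |z| = r. For all sufficiently small r > 0, the Euclidean curvature κ of Z satisfies κ = −q r^q (1 + O(r^q)), so in particular κ < −(q/2) r^q. -/

import Mathlib

open Complex Metric Filter Topology Set

set_option maxHeartbeats 1000000 in
/-- for `ω(z) = z^{-(q+1)} + ρ/z + e(z)` with `e` holomorphic near `0`, the
Euclidean curvature `κ(z) = |zω(z)|⁻¹ Re(1 + zω'(z)/ω(z))` of the lift of the circle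
`|z| = r` satisfies `κ = -q r^q (1 + O(r^q))`, in particular `κ < -(q/2) r^q` for all
sufficiently small `r`. -/
theorem lifted_circle_curvature
    (q : ℕ) (hq : 1 ≤ q) (ρ : ℂ) (r₀ : ℝ) (hr₀ : 0 < r₀) (e : ℂ → ℂ)
    (he : DifferentiableOn ℂ e (ball 0 r₀))
    (ω : ℂ → ℂ) (hω : ∀ z, ω z = (z^(q+1))⁻¹ + ρ * z⁻¹ + e z)
    (κ : ℂ → ℝ)
    (hκ : ∀ z, κ z = (‖z * ω z‖)⁻¹ * (1 + z * deriv ω z / ω z).re) :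
    ∃ C > 0, ∃ r₁ > 0, r₁ ≤ r₀ ∧ ∀ z : ℂ, z ≠ 0 → ‖z‖ < r₁ →
      |κ z + q * ‖z‖ ^ q| ≤ C * ‖z‖ ^ (2*q) ∧
      κ z < -((q : ℝ)/2) * ‖z‖ ^ q := by
  classical
  have hball : closedBall (0:ℂ) (r₀/2) ⊆ ball 0 r₀ := closedBall_subset_ball (by linarith)
  have hean : AnalyticOnNhd ℂ e (ball 0 r₀) := he.analyticOnNhd isOpen_ball
  have hde : DifferentiableOn ℂ (deriv e) (ball 0 r₀) := hean.deriv.differentiableOn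
  obtain ⟨M₁, hM₁⟩ := (isCompact_closedBall (0:ℂ) (r₀/2)).exists_bound_of_continuousOn
    (he.continuousOn.mono hball)
  obtain ⟨M₂, hM₂⟩ := (isCompact_closedBall (0:ℂ) (r₀/2)).exists_bound_of_continuousOn
    (hde.continuousOn.mono hball)
  set M : ℝ := max (max M₁ M₂) 0 with hMdef
  have hM0 : 0 ≤ M := le_max_right _ _
  have hMe : ∀ w ∈ closedBall (0:ℂ) (r₀/2), ‖e w‖ ≤ M := fun w hw =>
    (hM₁ w hw).trans ((le_max_left _ _).trans (le_max_left _ _))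
  have hMd : ∀ w ∈ closedBall (0:ℂ) (r₀/2), ‖deriv e w‖ ≤ M := fun w hw =>
    (hM₂ w hw).trans ((le_max_right _ _).trans (le_max_left _ _))
  set K' : ℝ := ‖ρ‖ + r₀ * M + 1 with hK'def
  set K : ℝ := q * ‖ρ‖ + r₀ * ((q+1) * M + r₀ * M) + 1 with hKdef
  have hK'1 : 1 ≤ K' := by
    have := norm_nonneg ρ
    nlinarith
  have hK1 : 1 ≤ K := by
    have h1 : (0:ℝ) ≤ q * ‖ρ‖ := by positivity
    have h2 : (0:ℝ) ≤ r₀ * ((q+1) * M + r₀ * M) := by positivity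
    rw [hKdef]; linarith
  have hK'0 : 0 < K' := by linarith
  have hK0 : 0 < K := by linarith
  set C : ℝ := 4 * K + 2 * q * K' with hCdef
  have hq1 : (1:ℝ) ≤ (q:ℝ) := by exact_mod_cast hq
  have hC0 : 0 < C := by nlinarith
  refine ⟨C, hC0, min (r₀/2) (min 1 (min (K'⁻¹ * (1/2)) (C⁻¹ * (q/2)))), ?_, ?_, ?_⟩
  · have h1 : (0:ℝ) < r₀/2 := by linarith
    have h2 : (0:ℝ) < K'⁻¹ * (1/2) := by positivity
    have h3 : (0:ℝ) < C⁻¹ * (q/2) := by positivity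
    positivity
  · exact (min_le_left _ _).trans (by linarith)
  · intro z hz hzr
    set r : ℝ := ‖z‖ with hrdef
    have hr0 : 0 < r := norm_pos_iff.mpr hz
    have hrhalf : r < r₀/2 := lt_of_lt_of_le hzr (min_le_left _ _)
    have hr1 : r ≤ 1 := le_of_lt (lt_of_lt_of_le hzr ((min_le_right _ _).trans (min_le_left _ _)))
    have hrK' : r < K'⁻¹ * (1/2) := lt_of_lt_of_le hzr
      ((min_le_right _ _).trans ((min_le_right _ _).trans (min_le_left _ _)))
    have hrC : r < C⁻¹ * (q/2) := lt_of_lt_of_le hzr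
      ((min_le_right _ _).trans ((min_le_right _ _).trans (min_le_right _ _)))
    have hrq : r ^ q ≤ r := pow_le_of_le_one hr0.le hr1 (by omega)
    have hrq0 : 0 < r ^ q := pow_pos hr0 q
    have hrr₀ : r ≤ r₀ := by linarith
    have hzmem : z ∈ closedBall (0:ℂ) (r₀/2) := by
      simp [mem_closedBall, Complex.dist_eq, ← hrdef]; linarith
    have hzball : z ∈ ball (0:ℂ) r₀ := hball hzmem
    have hA : ‖e z‖ ≤ M := hMe z hzmem
    have hB : ‖deriv e z‖ ≤ M := hMd z hzmem
    have hzq : z ^ (q+1) ≠ 0 := pow_ne_zero _ hz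
    set A : ℂ := e z with hAdef
    set B : ℂ := deriv e z with hBdef
    set D : ℂ := 1 + ρ * z^q + z^(q+1) * A with hDdef
    set N : ℂ := -(q:ℂ) + z^(q+1) * (A + z * B) with hNdef
    -- derivative of ω at z
    have h1 : HasDerivAt (fun w : ℂ => (w^(q+1))⁻¹)
        (-((↑(q+1) : ℂ) * z ^ q) / (z^(q+1))^2) z := by
      have := (hasDerivAt_pow (q+1) z).inv hzq
      simpa [Pi.inv_def] using this
    have h2 : HasDerivAt (fun w : ℂ => ρ * w⁻¹) (ρ * (-(z^2)⁻¹)) z :=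
      (hasDerivAt_inv hz).const_mul ρ
    have h3 : HasDerivAt e B z :=
      (he.differentiableAt (isOpen_ball.mem_nhds hzball)).hasDerivAt
    have hωfun : ω = fun w => (w^(q+1))⁻¹ + ρ * w⁻¹ + e w := funext hω
    have hd : HasDerivAt ω
        (-((↑(q+1) : ℂ) * z ^ q) / (z^(q+1))^2 + ρ * (-(z^2)⁻¹) + B) z := by
      rw [hωfun]; exact (h1.add h2).add h3
    have hderiv : deriv ω z =
        -((↑(q+1) : ℂ) * z ^ q) / (z^(q+1))^2 + ρ * (-(z^2)⁻¹) + B := hd.deriv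
    -- bounds on D
    have hD1 : ‖D - 1‖ ≤ r^q * K' := by
      have e1 : D - 1 = ρ * z^q + z^(q+1) * A := by rw [hDdef]; ring
      calc ‖D - 1‖ ≤ ‖ρ * z^q‖ + ‖z^(q+1) * A‖ := by
            rw [e1]; exact norm_add_le _ _
        _ = ‖ρ‖ * r^q + r^(q+1) * ‖A‖ := by
            simp [norm_mul, norm_pow, ← hrdef]
        _ ≤ ‖ρ‖ * r^q + (r^q * r₀) * M := by
            have : r^(q+1) = r^q * r := by ring
            rw [this]
            have h1 : r^q * r * ‖A‖ ≤ r^q * r₀ * M := by gcongr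
            linarith
        _ = r^q * K' - r^q := by rw [hK'def]; ring
        _ ≤ r^q * K' := by linarith
    have hDhalf : ‖D - 1‖ ≤ 1/2 := by
      have h1 : r^q * K' ≤ r * K' := mul_le_mul_of_nonneg_right hrq hK'0.le
      have h2 : r * K' < (K'⁻¹ * (1/2)) * K' := mul_lt_mul_of_pos_right hrK' hK'0
      have h3 : (K'⁻¹ * (1/2)) * K' = 1/2 := by
        rw [mul_comm, ← mul_assoc, mul_inv_cancel₀ (ne_of_gt hK'0), one_mul]
      exact hD1.trans (h1.trans (le_of_lt (lt_of_lt_of_eq h2 h3)))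
    have hDlb : 1/2 ≤ ‖D‖ := by
      have e1 : D + -(D - 1) = 1 := by ring
      have h := norm_add_le D (-(D-1))
      rw [e1] at h
      simp only [norm_one, norm_neg] at h
      linarith
    have hDub : ‖D‖ ≤ 3/2 := by
      have e1 : (D - 1) + 1 = D := by ring
      have h := norm_add_le (D - 1) 1
      rw [e1] at h; simp only [norm_one] at h; linarith
    have hD0 : D ≠ 0 := by
      intro h; rw [h] at hDlb; simp at hDlb; linarith
    -- ω z in terms of D
    have hωz : ω z = D / z^(q+1) := by
      rw [hω z, hDdef, ← hAdef]; field_simp; ring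
    have hω0 : ω z ≠ 0 := by rw [hωz]; exact div_ne_zero hD0 hzq
    have hzω : ‖z * ω z‖ = ‖D‖ / r^q := by
      have e1 : z * ω z = D / z^q := by
        rw [hωz]; field_simp; ring
      rw [e1, norm_div, norm_pow, ← hrdef]
    -- key identity
    have hkey : 1 + z * deriv ω z / ω z = N / D := by
      rw [hderiv, hωz, hNdef]
      field_simp
      rw [hDdef]
      push_cast
      ring
    set X : ℝ := ((N + (q:ℂ) * D)/D).re with hXdef
    have hNX : (N/D).re = X - q := by
      have e1 : N/D = (N + (q:ℂ)*D)/D - (q:ℂ) := by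
        field_simp
        ring
      rw [e1, Complex.sub_re, hXdef]
      simp
    have hκz : κ z = r^q / ‖D‖ * (X - q) := by
      rw [hκ z, hzω, hkey, hNX, inv_div]
    -- bound on X
    have hNqD : ‖N + (q:ℂ)*D‖ ≤ r^q * K := by
      have e1 : N + (q:ℂ)*D = z^q * ((q:ℂ)*ρ + z*(((q:ℂ)+1)*A + z*B)) := by
        rw [hNdef, hDdef]; push_cast; ring
      have hb1 : ‖((q:ℂ)+1)*A + z*B‖ ≤ (q+1)*M + r₀*M := by
        calc ‖((q:ℂ)+1)*A + z*B‖
            ≤ ‖((q:ℂ)+1)*A‖ + ‖z*B‖ := norm_add_le _ _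
          _ = ((q:ℝ)+1) * ‖A‖ + r * ‖B‖ := by
              have habsq1 : ‖(q:ℂ)+1‖ = (q:ℝ)+1 := by
                rw [show ((q:ℂ)+1) = ((q+1:ℕ):ℂ) from by push_cast; ring,
                  Complex.norm_natCast]
                push_cast; ring
              rw [norm_mul, norm_mul, ← hrdef, habsq1]
          _ ≤ ((q:ℝ)+1)*M + r₀*M := by gcongr
      have hb2 : ‖(q:ℂ)*ρ + z*(((q:ℂ)+1)*A + z*B)‖
          ≤ q * ‖ρ‖ + r₀*((q+1)*M + r₀*M) := by
        calc ‖(q:ℂ)*ρ + z*(((q:ℂ)+1)*A + z*B)‖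
            ≤ ‖(q:ℂ)*ρ‖ + ‖z*(((q:ℂ)+1)*A + z*B)‖ :=
              norm_add_le _ _
          _ = q * ‖ρ‖ + r * ‖((q:ℂ)+1)*A + z*B‖ := by
              rw [norm_mul, norm_mul, ← hrdef, Complex.norm_natCast]
          _ ≤ q * ‖ρ‖ + r₀*(((q:ℝ)+1)*M + r₀*M) := by
              have h2 : r * ‖((q:ℂ)+1)*A + z*B‖ ≤ r₀*(((q:ℝ)+1)*M + r₀*M) := by
                gcongr
              linarith
      calc ‖N + (q:ℂ)*D‖ = r^q * ‖(q:ℂ)*ρ + z*(((q:ℂ)+1)*A + z*B)‖ := by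
            rw [e1, norm_mul, norm_pow, ← hrdef]
        _ ≤ r^q * (q * ‖ρ‖ + r₀*(((q:ℝ)+1)*M + r₀*M)) := by
            gcongr
        _ ≤ r^q * K := by
            have : q * ‖ρ‖ + r₀*(((q:ℝ)+1)*M + r₀*M) ≤ K := by
              rw [hKdef]; linarith
            exact mul_le_mul_of_nonneg_left this hrq0.le
    have hXb : |X| ≤ 2 * r^q * K := by
      calc |X| ≤ ‖(N + (q:ℂ)*D)/D‖ := Complex.abs_re_le_norm _
        _ = ‖N + (q:ℂ)*D‖ / ‖D‖ := norm_div _ _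
        _ ≤ (r^q * K) / (1/2) := by
            apply div_le_div₀ (by positivity) hNqD (by norm_num) hDlb
        _ = 2 * r^q * K := by ring
    have habsD1 : |‖D‖ - 1| ≤ r^q * K' := by
      have h := abs_norm_sub_norm_le D 1
      simp only [norm_one] at h
      linarith [hD1]
    -- main identity
    have hmain : κ z + q * r^q = r^q * (X + q * (‖D‖ - 1)) / ‖D‖ := by
      have hDne : ‖D‖ ≠ 0 := by positivity
      rw [hκz]; field_simp; ring
    have hnum : |X + q * (‖D‖ - 1)| ≤ 2 * r^q * K + q * (r^q * K') := by
      calc |X + q * (‖D‖ - 1)| ≤ |X| + |(q:ℝ) * (‖D‖ - 1)| := abs_add_le _ _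
        _ = |X| + q * |‖D‖ - 1| := by rw [abs_mul, Nat.abs_cast]
        _ ≤ 2 * r^q * K + q * (r^q * K') := by
            have h5 : (q:ℝ) * |‖D‖ - 1| ≤ q * (r^q * K') :=
              mul_le_mul_of_nonneg_left habsD1 (Nat.cast_nonneg q)
            linarith
    have hbound : |κ z + q * r^q| ≤ C * (r^q * r^q) := by
      rw [hmain, abs_div, abs_mul, _root_.abs_of_nonneg hrq0.le,
        _root_.abs_of_nonneg (norm_nonneg D)]
      calc r^q * |X + q * (‖D‖ - 1)| / ‖D‖
          ≤ r^q * (2 * r^q * K + q * (r^q * K')) / (1/2) := by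
            apply div_le_div₀ (by positivity) ?_ (by norm_num) hDlb
            exact mul_le_mul_of_nonneg_left hnum hrq0.le
        _ = C * (r^q * r^q) := by rw [hCdef]; ring
    have hr2q : r ^ (2*q) = r^q * r^q := by rw [two_mul, pow_add]
    constructor
    · rw [hr2q]; exact hbound
    · have hCr : C * r^q < q/2 := by
        have h1 : C * r^q ≤ C * r := mul_le_mul_of_nonneg_left hrq hC0.le
        have h2 : C * r < C * (C⁻¹ * (q/2)) := mul_lt_mul_of_pos_left hrC hC0
        have h3 : C * (C⁻¹ * (q/2)) = q/2 := by
          rw [← mul_assoc, mul_inv_cancel₀ (ne_of_gt hC0), one_mul]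
        exact lt_of_le_of_lt h1 (lt_of_lt_of_eq h2 h3)
      have h4 : κ z + q * r^q ≤ C * (r^q * r^q) := (abs_le.mp hbound).2
      have h5 : C * r^q * r^q < (q/2) * r^q := mul_lt_mul_of_pos_right hCr hrq0
      have h6 : C * (r^q * r^q) = C * r^q * r^q := by ring
      have h7 : C * (r^q * r^q) < ((q:ℝ)/2) * r^q := by rw [h6]; exact h5
      have h8 : κ z + (q:ℝ) * r^q < ((q:ℝ)/2) * r^q := lt_of_le_of_lt h4 h7
      calc κ z < ((q:ℝ)/2) * r^q - (q:ℝ) * r^q := lt_sub_iff_add_lt.mpr h8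
        _ = -((q:ℝ)/2) * r^q := by ring
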